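/- Let Q : H → H be monotone and Lipschitz and let x : [t₀,∞) → H, t₀ > 0, be a strong solution of ẍ(t) + (α/t)ẋ(t) + β(t)·(d/dt)Q(x(t)) + b(t)Q(x(t)) = 0 where b(t) := β'(t) + β(t)/t and β(t) := β₀ t^{α−2}, with α > 1 and β₀ > 0. Then x satisfies the first-order (Tikhonov-regularized) equation ẋ(t) + β₀ t^{α−2} Q(x(t)) + ((α−1)/t)(x(t) − v) = 0 for all t ≥ t₀, where v := (t₀/(α−1))(ẋ(t₀) + β(t₀)Q(x(t₀))) + x(t₀). -/

import Mathlib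

/-- When `β(t) = β₀ t^{α−2}` saturates the growth condition and
`b(t) = β'(t) + β(t)/t`, the second-order system reduces to the Tikhonov-regularized
first-order flow `ẋ + β₀ t^{α−2} Q(x) + ((α−1)/t)(x − v) = 0`. -/
theorem stmt14 {H : Type*} [NormedAddCommGroup H] [InnerProductSpace ℝ H] [CompleteSpace H]
    (Q : H → H) (L : NNReal)
    (hmono : ∀ u v : H, 0 ≤ (inner ℝ (Q u - Q v) (u - v) : ℝ))
    (hLip : LipschitzWith L Q)
    (α β₀ t₀ : ℝ) (hα : 1 < α) (hβ₀ : 0 < β₀) (ht₀ : 0 < t₀)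
    (β : ℝ → ℝ) (hβ : ∀ t : ℝ, β t = β₀ * t ^ (α - 2))
    (x x' x'' q' : ℝ → H)
    (hx : ∀ t ≥ t₀, HasDerivAt x (x' t) t)
    (hx' : ∀ t ≥ t₀, HasDerivAt x' (x'' t) t)
    (hq : ∀ t ≥ t₀, HasDerivAt (fun s => Q (x s)) (q' t) t)
    (hode : ∀ t ≥ t₀,
      x'' t + (α / t) • x' t + β t • q' t + (deriv β t + β t / t) • Q (x t) = 0) :
    ∀ t ≥ t₀, x' t + (β₀ * t ^ (α - 2)) • Q (x t)
      + ((α - 1) / t) • (x t - ((t₀ / (α - 1)) • (x' t₀ + β t₀ • Q (x t₀)) + x t₀)) = 0 := by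
  have hβfun : β = fun s : ℝ => β₀ * s ^ (α - 2) := funext hβ
  -- derivative of β at positive t
  have hβderiv : ∀ t : ℝ, 0 < t → HasDerivAt β (β₀ * ((α - 2) * t ^ (α - 3))) t := by
    intro t ht
    have h1 : HasDerivAt (fun s : ℝ => s ^ (α - 2)) ((α - 2) * t ^ (α - 2 - 1)) t :=
      Real.hasDerivAt_rpow_const (Or.inl ht.ne')
    have h2 := h1.const_mul β₀
    rw [hβfun]
    convert h2 using 2
    · rfl
    · rfl
    rw [show α - 2 - 1 = α - 3 by ring]
  -- the conserved function
  set g : ℝ → H := fun s => s • x' s + (s * β s) • Q (x s) + (α - 1) • x s with hg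
  have hgderiv : ∀ t, t₀ ≤ t → HasDerivAt g 0 t := by
    intro t ht
    have htpos : 0 < t := lt_of_lt_of_le ht₀ ht
    have h1 : HasDerivAt (fun s : ℝ => s • x' s) (t • x'' t + (1 : ℝ) • x' t) t :=
      (hasDerivAt_id t).smul (hx' t ht)
    have hsb := (hasDerivAt_id t).mul (hβderiv t htpos)
    have h2 := hsb.smul (hq t ht)
    have h3 : HasDerivAt (fun s : ℝ => (α - 1) • x s) ((α - 1) • x' t) t :=
      (hx t ht).const_smul (α - 1)
    have h := (h1.add h2).add h3
    have key := hode t ht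
    rw [(hβderiv t htpos).deriv] at key
    have hx''eq : x'' t = -((α / t) • x' t + β t • q' t
        + (β₀ * ((α - 2) * t ^ (α - 3)) + β t / t) • Q (x t)) := by
      have := key
      rw [add_assoc, add_assoc] at this
      have h' := eq_neg_of_add_eq_zero_left this
      rw [h']
      rw [add_assoc]
    convert h using 1
    · rfl
    simp only [Pi.mul_apply, id_eq]
    rw [hx''eq, hβ t]
    have hts : t ^ (α - 2) = t ^ (α - 3) * t := by
      rw [← Real.rpow_add_one htpos.ne']
      ring_nf
    rw [hts]
    match_scalars <;> field_simp <;> ring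
  -- g is constant on [t₀, ∞)
  have hgconst : ∀ t, t₀ ≤ t → g t = g t₀ := by
    intro t ht
    have := constant_of_has_deriv_right_zero (f := g) (a := t₀) (b := t)
      (fun s hs => ((hgderiv s hs.1).continuousAt).continuousWithinAt)
      (fun s hs => (hgderiv s hs.1).hasDerivWithinAt)
    exact this t ⟨ht, le_refl t⟩
  intro t ht
  have htpos : 0 < t := lt_of_lt_of_le ht₀ ht
  have hα1 : α - 1 ≠ 0 := by linarith
  have heq : g t - g t₀ = 0 := sub_eq_zero.mpr (hgconst t ht)
  have hzero : (1 / t) • (g t - g t₀) = 0 := by rw [heq, smul_zero]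
  rw [← hzero, hg]
  simp only [hβ]
  match_scalars <;> field_simp <;> ring
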